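/- Let c be the 2-edge-colouring of K_4 on vertex set {1,2,3,4} with colour 1 on the pairs {1,2}, {2,3}, {3,4} and colour 2 on the pairs {1,3}, {2,4}, {1,4} (each colour class is a path on 4 vertices). Then for every n ≥ 1, every c-free 2-edge-colouring of K_n has a homogeneous set of size at least n^{1/2}; equivalently, h_2(n, c) ≥ n^{1/2}. -/

import Mathlib

/-- A set `X` is homogeneous for an edge-colouring `c` of `K_n` with colours in `Fin s`
if some colour does not appear on pairs of distinct elements of `X`. -/
def IsHomog {n s : ℕ} (c : Sym2 (Fin n) → Fin s) (X : Finset (Fin n)) : Prop :=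
  ∃ i : Fin s, ∀ x ∈ X, ∀ y ∈ X, x ≠ y → c s(x, y) ≠ i

/-- `c` contains a copy of the pattern `c'` (colours compared via their indices). -/
def HasCopy {n s k s' : ℕ} (c : Sym2 (Fin n) → Fin s) (c' : Sym2 (Fin k) → Fin s') : Prop :=
  ∃ φ : Fin k ↪ Fin n, ∀ x y : Fin k, x ≠ y →
    ((c s(φ x, φ y) : ℕ) = (c' s(x, y) : ℕ))

/-- The 2-edge-colouring of `K_4` in which colour `0` forms the path
`0-1-2-3` and colour `1` forms the complementary path `1-3-0-2`. -/
def cP4 : Sym2 (Fin 4) → Fin 2 := fun e =>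
  if e = s((0 : Fin 4), (1 : Fin 4)) ∨ e = s((1 : Fin 4), (2 : Fin 4)) ∨
     e = s((2 : Fin 4), (3 : Fin 4)) then 0 else 1



namespace Stmt8Aux

variable {n : ℕ}

def EE (R : Fin n → Fin n → Prop) (S : Finset (Fin n)) (u v : Fin n) : Prop :=
  u ∈ S ∧ v ∈ S ∧ R u v

def Reach (R : Fin n → Fin n → Prop) (S : Finset (Fin n)) : Fin n → Fin n → Prop :=
  Relation.ReflTransGen (EE R S)

def P4F (R : Fin n → Fin n → Prop) : Prop :=
  ∀ a b c d : Fin n, a ≠ b → a ≠ c → a ≠ d → b ≠ c → b ≠ d → c ≠ d →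
    R a b → R b c → R c d → ¬R a c → ¬R b d → ¬R a d → False

def Rc (R : Fin n → Fin n → Prop) : Fin n → Fin n → Prop := fun u v => u ≠ v ∧ ¬ R u v

def Disc (R : Fin n → Fin n → Prop) (S : Finset (Fin n)) : Prop :=
  ∃ a ∈ S, ∃ b ∈ S, ¬ Reach R S a b

variable {R : Fin n → Fin n → Prop}

lemma reach_symm (hsym : ∀ u v, R u v → R v u) {S : Finset (Fin n)} {a b : Fin n}
    (h : Reach R S a b) : Reach R S b a :=
  (@Relation.ReflTransGen.symmetric _ _ ⟨fun u v h => ⟨h.2.1, h.1, hsym _ _ h.2.2⟩⟩).symm _ _ h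

lemma reach_mem {S : Finset (Fin n)} {a b : Fin n} (h : Reach R S a b) (ha : a ∈ S) :
    b ∈ S := by
  induction h with
  | refl => exact ha
  | tail _ h2 _ => exact h2.2.1

lemma rc_symm (hsym : ∀ u v, R u v → R v u) : ∀ u v, Rc R u v → Rc R v u :=
  fun u v h => ⟨h.1.symm, fun hr => h.2 (hsym _ _ hr)⟩

lemma rc_irr : ∀ u, ¬ Rc R u u := fun u h => h.1 rfl

lemma rc_p4f (hsym : ∀ u v, R u v → R v u) (hP4 : P4F R) : P4F (Rc R) := by
  intro a b c d hab hac had hbc hbd hcd e1 e2 e3 n1 n2 n3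
  have rac : R a c := by
    by_contra h; exact n1 ⟨hac, h⟩
  have rbd : R b d := by
    by_contra h; exact n2 ⟨hbd, h⟩
  have rad : R a d := by
    by_contra h; exact n3 ⟨had, h⟩
  exact hP4 c a d b hac.symm hcd hbc.symm had hab hbd.symm
    (hsym _ _ rac) rad (hsym _ _ rbd) (fun h => e3.2 h) (fun h => e1.2 h)
    (fun h => e2.2 (hsym _ _ h))

lemma phase {E : Fin n → Fin n → Prop} {P : Fin n → Prop} {u v : Fin n}
    (h : Relation.ReflTransGen E u v) (hu : P u) (hv : ¬ P v) :
    ∃ p q, Relation.ReflTransGen E u p ∧ E p q ∧ P p ∧ ¬ P q := by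
  induction h with
  | refl => exact absurd hu hv
  | @tail b c hub hbc ih =>
    by_cases hb : P b
    · exact ⟨b, c, hub, hbc, hb, hv⟩
    · exact ih hb

lemma stay (hsym : ∀ u v, R u v → R v u) {S : Finset (Fin n)} {x v : Fin n}
    (hv : v ∈ S.erase x)
    (h : ∀ y, Reach R (S.erase x) v y → ¬ R x y) :
    ∀ z, Reach R S v z → Reach R (S.erase x) v z := by
  intro z hz
  induction hz with
  | refl => exact Relation.ReflTransGen.refl
  | @tail b c hb hbc ih =>
    have hbmem : b ∈ S.erase x := reach_mem ih hv
    have hcx : c ≠ x := by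
      rintro rfl
      exact h b ih (hsym _ _ hbc.2.2)
    exact ih.tail ⟨hbmem, Finset.mem_erase.2 ⟨hcx, hbc.2.1⟩, hbc.2.2⟩

/-- Key dichotomy: if `x ∉ S'` has a neighbour `w ∈ S'` not reachable from `v` in `S'`,
then `x` is adjacent to all or none of the component of `v` in `S'`. -/
lemma key (hsym : ∀ u v, R u v → R v u) (hirr : ∀ u, ¬ R u u) (hP4 : P4F R)
    {S' : Finset (Fin n)} {x v w : Fin n} (hx : x ∉ S') (hw : w ∈ S')
    (hxw : R x w) (hvw : ¬ Reach R S' v w) :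
    (∀ y, Reach R S' v y → R x y) ∨ (∀ y, Reach R S' v y → ¬ R x y) := by
  by_contra hcon
  push_neg at hcon
  obtain ⟨⟨y1, hy1r, hy1⟩, ⟨y2, hy2r, hy2⟩⟩ := hcon
  have h21 : Reach R S' y2 v := reach_symm hsym hy2r
  have h2to1 : Reach R S' y2 y1 := h21.trans hy1r
  obtain ⟨p, q, h2p, hpq, hPp, hPq⟩ := phase h2to1 hy2 hy1
  have hvp : Reach R S' v p := hy2r.trans h2p
  have hvq : Reach R S' v q := hvp.tail hpq
  have hpS : p ∈ S' := hpq.1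
  have hqS : q ∈ S' := hpq.2.1
  have hqw : ¬ R q w := fun h => hvw (hvq.tail ⟨hqS, hw, h⟩)
  have hpw : ¬ R p w := fun h => hvw (hvp.tail ⟨hpS, hw, h⟩)
  have hqp : q ≠ p := fun h => hirr p (h ▸ hpq.2.2)
  have hqx : q ≠ x := fun h => hx (h ▸ hqS)
  have hpx : p ≠ x := fun h => hx (h ▸ hpS)
  have hqwne : q ≠ w := fun h => hvw (h ▸ hvq)
  have hpwne : p ≠ w := fun h => hvw (h ▸ hvp)
  have hxwne : x ≠ w := fun h => hx (h ▸ hw)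
  exact hP4 q p x w hqp hqx hqwne hpx hpwne hxwne
    (hsym _ _ hpq.2.2) (hsym _ _ hPp) hxw
    (fun h => hPq (hsym _ _ h)) hpw hqw

/-- Seinsche step: if `S.erase x` is disconnected then either `S` is disconnected
or `x` is adjacent to everything in `S.erase x`. -/
lemma step (hsym : ∀ u v, R u v → R v u) (hirr : ∀ u, ¬ R u u) (hP4 : P4F R)
    {S : Finset (Fin n)} {x : Fin n} (hx : x ∈ S)
    (hdisc : Disc R (S.erase x)) :
    Disc R S ∨ (∀ v ∈ S.erase x, R x v) := by
  classical
  obtain ⟨a, ha, b, hb, hab⟩ := hdisc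
  by_cases hD : Disc R S
  · exact Or.inl hD
  right
  intro v hv
  -- v cannot reach both a and b in S.erase x
  have hvnot : ¬ Reach R (S.erase x) v a ∨ ¬ Reach R (S.erase x) v b := by
    by_contra hcc
    push_neg at hcc
    exact hab ((reach_symm hsym hcc.1).trans hcc.2)
  have hxS' : x ∉ S.erase x := Finset.notMem_erase x S
  -- x must have a neighbour in the component of a, else S is disconnected via a
  have hna : ∃ u, Reach R (S.erase x) a u ∧ R x u := by
    by_contra hno
    push_neg at hno
    have := stay hsym ha (fun y hy => hno y hy) 
    exact hD ⟨a, Finset.mem_of_mem_erase ha, b, Finset.mem_of_mem_erase hb,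
      fun h => hab (this b h)⟩
  have hnb : ∃ u, Reach R (S.erase x) b u ∧ R x u := by
    by_contra hno
    push_neg at hno
    have := stay hsym hb (fun y hy => hno y hy)
    exact hD ⟨b, Finset.mem_of_mem_erase hb, a, Finset.mem_of_mem_erase ha,
      fun h => (fun hba => hab (reach_symm hsym hba)) (this a h)⟩
  obtain ⟨ua, hua, hxua⟩ := hna
  obtain ⟨ub, hub, hxub⟩ := hnb
  -- v can't reach one of a, b; pick the corresponding neighbour as outside witness
  rcases hvnot with hnv | hnv
  · -- v can't reach a, so can't reach ua
    have huaS : ua ∈ S.erase x := reach_mem hua ha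
    have hvua : ¬ Reach R (S.erase x) v ua := fun h =>
      hnv (h.trans (reach_symm hsym hua))
    rcases key hsym hirr hP4 hxS' huaS hxua hvua with hall | hnone
    · exact hall v Relation.ReflTransGen.refl
    · exfalso
      have := stay hsym hv hnone
      exact hD ⟨v, Finset.mem_of_mem_erase hv, a, Finset.mem_of_mem_erase ha,
        fun h => hnv (this a h)⟩
  · have hubS : ub ∈ S.erase x := reach_mem hub hb
    have hvub : ¬ Reach R (S.erase x) v ub := fun h =>
      hnv (h.trans (reach_symm hsym hub))
    rcases key hsym hirr hP4 hxS' hubS hxub hvub with hall | hnone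
    · exact hall v Relation.ReflTransGen.refl
    · exfalso
      have := stay hsym hv hnone
      exact hD ⟨v, Finset.mem_of_mem_erase hv, b, Finset.mem_of_mem_erase hb,
        fun h => hnv (this b h)⟩

lemma noreach (hirr : ∀ u, ¬ R u u) {S : Finset (Fin n)} {a b : Fin n} (hab : a ≠ b)
    (h : ∀ c ∈ S, c ≠ a → ¬ R a c) : ¬ Reach R S a b := by
  intro hr
  rcases hr.cases_head with heq | ⟨c, hac, _⟩
  · exact hab heq
  · have hca : c ≠ a := fun he => hirr a (he ▸ hac.2.2)
    exact h c hac.2.1 hca hac.2.2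

lemma seinsche (hsym : ∀ u v, R u v → R v u) (hirr : ∀ u, ¬ R u u) (hP4 : P4F R) :
    ∀ S : Finset (Fin n), 2 ≤ S.card → Disc R S ∨ Disc (Rc R) S := by
  intro S
  induction S using Finset.strongInduction with
  | _ S ih =>
  intro hcard
  rcases eq_or_lt_of_le hcard with h2 | h3
  · -- |S| = 2
    obtain ⟨a, b, hab, rfl⟩ := Finset.card_eq_two.1 h2.symm
    have haS : a ∈ ({a, b} : Finset (Fin n)) := by simp
    have hbS : b ∈ ({a, b} : Finset (Fin n)) := by simp
    by_cases hr : R a b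
    · right
      refine ⟨a, haS, b, hbS, noreach rc_irr hab ?_⟩
      intro c hc hca hrc
      rcases Finset.mem_insert.1 hc with rfl | hc2
      · exact hca rfl
      · rw [Finset.mem_singleton.1 hc2] at hrc
        exact hrc.2 hr
    · left
      refine ⟨a, haS, b, hbS, noreach hirr hab ?_⟩
      intro c hc hca hrc
      rcases Finset.mem_insert.1 hc with rfl | hc2
      · exact hirr _ hrc
      · rw [Finset.mem_singleton.1 hc2] at hrc
        exact hr hrc
  · -- |S| ≥ 3
    obtain ⟨x, hx⟩ := Finset.card_pos.1 (show 0 < S.card by omega)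
    have hsub : S.erase x ⊂ S := Finset.erase_ssubset hx
    have hcard' : 2 ≤ (S.erase x).card := by
      rw [Finset.card_erase_of_mem hx]; omega
    obtain ⟨b, hb⟩ := Finset.card_pos.1 (by omega : 0 < (S.erase x).card)
    have hbx : b ≠ x := (Finset.mem_erase.1 hb).1
    have hbS : b ∈ S := Finset.mem_of_mem_erase hb
    rcases ih (S.erase x) hsub hcard' with hd | hd
    · rcases step hsym hirr hP4 hx hd with h | h
      · exact Or.inl h
      · right
        refine ⟨x, hx, b, hbS, noreach rc_irr (Ne.symm hbx) ?_⟩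
        intro c hc hcx hrc
        exact hrc.2 (h c (Finset.mem_erase.2 ⟨hcx, hc⟩))
    · rcases step (rc_symm hsym) rc_irr (rc_p4f hsym hP4) hx hd with h | h
      · exact Or.inr h
      · left
        refine ⟨x, hx, b, hbS, noreach hirr (Ne.symm hbx) ?_⟩
        intro c hc hcx hrc
        exact (h c (Finset.mem_erase.2 ⟨hcx, hc⟩)).2 hrc

def Pack (R : Fin n → Fin n → Prop) (S : Finset (Fin n)) : Prop :=
  ∃ K I : Finset (Fin n), K ⊆ S ∧ I ⊆ S ∧
    (∀ u ∈ K, ∀ v ∈ K, u ≠ v → R u v) ∧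
    (∀ u ∈ I, ∀ v ∈ I, u ≠ v → ¬ R u v) ∧ S.card ≤ K.card * I.card

lemma disc_split (hsym : ∀ u v, R u v → R v u) {S : Finset (Fin n)} (hd : Disc R S) :
    ∃ A B : Finset (Fin n), A ∪ B = S ∧ Disjoint A B ∧ A.Nonempty ∧ B.Nonempty ∧
      ∀ u ∈ A, ∀ v ∈ B, ¬ R u v := by
  classical
  obtain ⟨a, ha, b, hb, hab⟩ := hd
  refine ⟨S.filter (Reach R S a), S \ S.filter (Reach R S a), ?_, Finset.disjoint_sdiff, 
    ⟨a, Finset.mem_filter.2 ⟨ha, Relation.ReflTransGen.refl⟩⟩,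
    ⟨b, Finset.mem_sdiff.2 ⟨hb, fun h => hab (Finset.mem_filter.1 h).2⟩⟩, ?_⟩
  · exact Finset.union_sdiff_of_subset (Finset.filter_subset _ _)
  · intro u hu v hv hr
    obtain ⟨huS, hru⟩ := Finset.mem_filter.1 hu
    obtain ⟨hvS, hnv⟩ := Finset.mem_sdiff.1 hv
    exact hnv (Finset.mem_filter.2 ⟨hvS, hru.tail ⟨huS, hvS, hr⟩⟩)

lemma glue (hsym : ∀ u v, R u v → R v u) {S A B : Finset (Fin n)}
    (hU : A ∪ B = S) (hdis : Disjoint A B) (hno : ∀ u ∈ A, ∀ v ∈ B, ¬ R u v)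
    (hA : Pack R A) (hB : Pack R B) : Pack R S := by
  obtain ⟨KA, IA, hKAs, hIAs, hKAc, hIAi, hAcard⟩ := hA
  obtain ⟨KB, IB, hKBs, hIBs, hKBc, hIBi, hBcard⟩ := hB
  have hAS : A ⊆ S := hU ▸ Finset.subset_union_left
  have hBS : B ⊆ S := hU ▸ Finset.subset_union_right
  refine ⟨if KA.card ≤ KB.card then KB else KA, IA ∪ IB, ?_, ?_, ?_, ?_, ?_⟩
  · split_ifs
    · exact hKBs.trans hBS
    · exact hKAs.trans hAS
  · exact Finset.union_subset (hIAs.trans hAS) (hIBs.trans hBS)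
  · split_ifs
    · exact hKBc
    · exact hKAc
  · intro u hu v hv huv
    rcases Finset.mem_union.1 hu with hu | hu <;> rcases Finset.mem_union.1 hv with hv | hv
    · exact hIAi u hu v hv huv
    · exact hno u (hIAs hu) v (hIBs hv)
    · exact fun h => hno v (hIAs hv) u (hIBs hu) (hsym _ _ h)
    · exact hIBi u hu v hv huv
  · have hIdis : Disjoint IA IB := hdis.mono hIAs hIBs
    have hIcard : (IA ∪ IB).card = IA.card + IB.card := Finset.card_union_of_disjoint hIdis
    have hScard : S.card = A.card + B.card := by
      rw [← hU, Finset.card_union_of_disjoint hdis]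
    set K := if KA.card ≤ KB.card then KB else KA with hK
    have hKA : KA.card ≤ K.card := by rw [hK]; split_ifs with h; exacts [h, le_rfl]
    have hKB : KB.card ≤ K.card := by rw [hK]; split_ifs with h; exacts [le_rfl, by omega]
    calc S.card = A.card + B.card := hScard
      _ ≤ KA.card * IA.card + KB.card * IB.card := Nat.add_le_add hAcard hBcard
      _ ≤ K.card * IA.card + K.card * IB.card :=
          Nat.add_le_add (Nat.mul_le_mul_right _ hKA) (Nat.mul_le_mul_right _ hKB)
      _ = K.card * (IA ∪ IB).card := by rw [hIcard, Nat.mul_add]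

lemma pack_rc {S : Finset (Fin n)} (hirr : ∀ u, ¬ R u u) (h : Pack (Rc R) S) : Pack R S := by
  obtain ⟨K, I, hKs, hIs, hKc, hIi, hcard⟩ := h
  refine ⟨I, K, hIs, hKs, ?_, ?_, by rw [Nat.mul_comm]; exact hcard⟩
  · intro u hu v hv huv
    by_contra hr
    exact hIi u hu v hv huv ⟨huv, hr⟩
  · intro u hu v hv huv hr
    exact (hKc u hu v hv huv).2 hr

lemma main_aux : ∀ m : ℕ, ∀ R : Fin n → Fin n → Prop,
    (∀ u v, R u v → R v u) → (∀ u, ¬ R u u) → P4F R →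
    ∀ S : Finset (Fin n), S.card ≤ m → Pack R S := by
  intro m
  induction m with
  | zero =>
    intro R hsym hirr hP4 S hS
    refine ⟨S, S, le_rfl, le_rfl, ?_, ?_, by omega⟩ <;>
    · intro u hu v hv huv
      exact absurd (Finset.card_le_one.1 (by omega) u hu v hv) huv
  | succ m ih =>
    intro R hsym hirr hP4 S hS
    by_cases hle : S.card ≤ 1
    · refine ⟨S, S, le_rfl, le_rfl, ?_, ?_, by nlinarith [S.card]⟩ <;>
      · intro u hu v hv huv
        exact absurd (Finset.card_le_one.1 hle u hu v hv) huv
    · have h2 : 2 ≤ S.card := by omega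
      have hcards : ∀ A B : Finset (Fin n), A ∪ B = S → Disjoint A B → A.Nonempty →
          B.Nonempty → A.card ≤ m ∧ B.card ≤ m := by
        intro A B hU hdis hAne hBne
        have : S.card = A.card + B.card := by
          rw [← hU, Finset.card_union_of_disjoint hdis]
        have ha := Finset.card_pos.2 hAne
        have hb := Finset.card_pos.2 hBne
        omega
      rcases seinsche hsym hirr hP4 S h2 with hd | hd
      · obtain ⟨A, B, hU, hdis, hAne, hBne, hno⟩ := disc_split hsym hd
        obtain ⟨hAm, hBm⟩ := hcards A B hU hdis hAne hBne
        exact glue hsym hU hdis hno (ih R hsym hirr hP4 A hAm) (ih R hsym hirr hP4 B hBm)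
      · obtain ⟨A, B, hU, hdis, hAne, hBne, hno⟩ := disc_split (rc_symm hsym) hd
        obtain ⟨hAm, hBm⟩ := hcards A B hU hdis hAne hBne
        exact pack_rc hirr (glue (rc_symm hsym) hU hdis hno
          (ih (Rc R) (rc_symm hsym) rc_irr (rc_p4f hsym hP4) A hAm)
          (ih (Rc R) (rc_symm hsym) rc_irr (rc_p4f hsym hP4) B hBm))

end Stmt8Aux


open Stmt8Aux in
theorem stmt8 :
    ∀ n : ℕ, 1 ≤ n → ∀ c'' : Sym2 (Fin n) → Fin 2, ¬ HasCopy c'' cP4 →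
      ∃ X : Finset (Fin n), IsHomog c'' X ∧ (n : ℝ) ^ ((1 : ℝ) / 2) ≤ (X.card : ℝ) := by
  intro N hN c'' hfree
  set R : Fin N → Fin N → Prop := fun u v => u ≠ v ∧ c'' s(u, v) = 0 with hRdef
  have hsym : ∀ u v, R u v → R v u := by
    intro u v h
    exact ⟨h.1.symm, by rw [Sym2.eq_swap]; exact h.2⟩
  have hirr : ∀ u, ¬ R u u := fun u h => h.1 rfl
  have C0 : ∀ u v : Fin N, R u v → (c'' s(u, v) : ℕ) = 0 := by
    intro u v h; rw [h.2]; rfl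
  have C1 : ∀ u v : Fin N, u ≠ v → ¬ R u v → (c'' s(u, v) : ℕ) = 1 := by
    intro u v huv h
    have h0 : c'' s(u, v) ≠ 0 := fun h0 => h ⟨huv, h0⟩
    have h1 : (c'' s(u, v) : ℕ) ≠ 0 := fun hh => h0 (Fin.ext hh)
    have h2 : (c'' s(u, v) : ℕ) < 2 := (c'' s(u, v)).isLt
    omega
  have hP4 : P4F R := by
    intro a b c d hab hac had hbc hbd hcd e1 e2 e3 n1 n2 n3
    apply hfree
    have P01 : (c'' s(a, b) : ℕ) = (cP4 s((0:Fin 4), 1) : ℕ) := by rw [C0 a b e1]; decide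
    have P10 : (c'' s(b, a) : ℕ) = (cP4 s((1:Fin 4), 0) : ℕ) := by
      rw [Sym2.eq_swap, C0 a b e1]; decide
    have P12 : (c'' s(b, c) : ℕ) = (cP4 s((1:Fin 4), 2) : ℕ) := by rw [C0 b c e2]; decide
    have P21 : (c'' s(c, b) : ℕ) = (cP4 s((2:Fin 4), 1) : ℕ) := by
      rw [Sym2.eq_swap, C0 b c e2]; decide
    have P23 : (c'' s(c, d) : ℕ) = (cP4 s((2:Fin 4), 3) : ℕ) := by rw [C0 c d e3]; decide
    have P32 : (c'' s(d, c) : ℕ) = (cP4 s((3:Fin 4), 2) : ℕ) := by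
      rw [Sym2.eq_swap, C0 c d e3]; decide
    have P02 : (c'' s(a, c) : ℕ) = (cP4 s((0:Fin 4), 2) : ℕ) := by rw [C1 a c hac n1]; decide
    have P20 : (c'' s(c, a) : ℕ) = (cP4 s((2:Fin 4), 0) : ℕ) := by
      rw [Sym2.eq_swap, C1 a c hac n1]; decide
    have P13 : (c'' s(b, d) : ℕ) = (cP4 s((1:Fin 4), 3) : ℕ) := by rw [C1 b d hbd n2]; decide
    have P31 : (c'' s(d, b) : ℕ) = (cP4 s((3:Fin 4), 1) : ℕ) := by
      rw [Sym2.eq_swap, C1 b d hbd n2]; decide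
    have P03 : (c'' s(a, d) : ℕ) = (cP4 s((0:Fin 4), 3) : ℕ) := by rw [C1 a d had n3]; decide
    have P30 : (c'' s(d, a) : ℕ) = (cP4 s((3:Fin 4), 0) : ℕ) := by
      rw [Sym2.eq_swap, C1 a d had n3]; decide
    refine ⟨⟨fun i => if i.val = 0 then a else if i.val = 1 then b else
      if i.val = 2 then c else d, ?_⟩, ?_⟩
    · intro x y h
      fin_cases x <;> fin_cases y <;>
        first
          | rfl
          | exact absurd h hab | exact absurd h.symm hab
          | exact absurd h hac | exact absurd h.symm hac
          | exact absurd h had | exact absurd h.symm had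
          | exact absurd h hbc | exact absurd h.symm hbc
          | exact absurd h hbd | exact absurd h.symm hbd
          | exact absurd h hcd | exact absurd h.symm hcd
    · intro x y hxy
      fin_cases x <;> fin_cases y <;>
        first
          | exact absurd rfl hxy
          | exact P01 | exact P10 | exact P12 | exact P21 | exact P23 | exact P32
          | exact P02 | exact P20 | exact P13 | exact P31 | exact P03 | exact P30
  obtain ⟨K, I, _, _, hKc, hIi, hcard⟩ :=
    main_aux (Fintype.card (Fin N)) R hsym hirr hP4 Finset.univ (le_of_eq Finset.card_univ)
  have hNcard : N ≤ K.card * I.card := by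
    simpa using hcard
  have hfin : ∀ X : Finset (Fin N), N ≤ X.card * X.card → IsHomog c'' X →
      ∃ X : Finset (Fin N), IsHomog c'' X ∧ (N : ℝ) ^ ((1 : ℝ) / 2) ≤ (X.card : ℝ) := by
    intro X hX hhomog
    refine ⟨X, hhomog, ?_⟩
    have h1 : (N : ℝ) ≤ ((X.card : ℝ)) ^ 2 := by
      rw [sq]
      exact_mod_cast hX
    calc (N : ℝ) ^ ((1 : ℝ) / 2) = Real.sqrt N := (Real.sqrt_eq_rpow N).symm
      _ ≤ Real.sqrt ((X.card : ℝ) ^ 2) := Real.sqrt_le_sqrt h1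
      _ = (X.card : ℝ) := Real.sqrt_sq (by positivity)
  rcases le_total K.card I.card with hle | hle
  · refine hfin I (le_trans hNcard (Nat.mul_le_mul_right _ hle)) ⟨0, ?_⟩
    intro x hx y hy hxy h0
    exact hIi x hx y hy hxy ⟨hxy, h0⟩
  · refine hfin K (le_trans hNcard (Nat.mul_le_mul_left _ hle)) ⟨1, ?_⟩
    intro x hx y hy hxy h1
    have := (hKc x hx y hy hxy).2
    rw [this] at h1
    exact absurd h1 (by decide)
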